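/- Let c > 0 and let u : S^n → ℝ be measurable with u ≥ c, and let E := {s·ω : ω ∈ S^n, 0 < s < u(ω)} ⊆ ℝ^{n+1} be the subgraph of u over S^n in polar coordinates. Let z₀ = (0,…,0,z₀^{n+1}) with z₀^{n+1} > 0, let t_i > 0 with t_i → 0, and suppose the sets E_{t_i} := {y ∈ ℝ^{n+1} : z₀ + t_i(y − z₀) ∈ E} converge in L¹_loc(ℝ^{n+1}) to a set C which is a cone and whose measure-theoretic boundary ∂C has Lebesgue measure zero. Then there exists a measurable function v : ℝ^n → [−∞,+∞] such that C coincides with the subgraph sub v up to a set of Lebesgue measure zero. -/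

import Mathlib

open MeasureTheory Metric

/-- Approximate density of a set `M` at `x` with respect to radius `ρ`. -/
noncomputable def approxDensity {d : ℕ} (M : Set (EuclideanSpace ℝ (Fin d))) (ρ : ℝ)
    (x : EuclideanSpace ℝ (Fin d)) : ENNReal :=
  volume (M ∩ ball x ρ) / volume (ball x ρ)

/-- `M` is directed with respect to `v`. -/
def DirectedWrt {d : ℕ} (M : Set (EuclideanSpace ℝ (Fin d)))
    (v : EuclideanSpace ℝ (Fin d)) : Prop :=
  ∀ x : EuclideanSpace ℝ (Fin d), ∀ ρ : ℝ, 0 < ρ →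
    Antitone (fun t : ℝ => approxDensity M ρ (x + t • v))

/-- Measure-theoretic interior. -/
def mInterior {d : ℕ} (M : Set (EuclideanSpace ℝ (Fin d))) :
    Set (EuclideanSpace ℝ (Fin d)) :=
  {x | ∃ ρ > (0 : ℝ), volume (ball x ρ \ M) = 0}

/-- Measure-theoretic exterior. -/
def mExterior {d : ℕ} (M : Set (EuclideanSpace ℝ (Fin d))) :
    Set (EuclideanSpace ℝ (Fin d)) :=
  {x | ∃ ρ > (0 : ℝ), volume (M ∩ ball x ρ) = 0}

/-- Measure-theoretic boundary. -/
def mBoundary {d : ℕ} (M : Set (EuclideanSpace ℝ (Fin d))) :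
    Set (EuclideanSpace ℝ (Fin d)) :=
  (mInterior M ∪ mExterior M)ᶜ

/-- The subgraph of an extended-real-valued function on `ℝⁿ`, as a subset of `ℝⁿ⁺¹`. -/
def subgraph {n : ℕ} (φ : EuclideanSpace ℝ (Fin n) → EReal) :
    Set (EuclideanSpace ℝ (Fin (n + 1))) :=
  {x | (x (Fin.last n) : EReal) < φ (WithLp.toLp 2 (fun i : Fin n => x i.castSucc))}

/-- `L¹_loc` convergence of a sequence of sets to a set, via characteristic functions. -/
def L1locConvergesTo {d : ℕ} (A : ℕ → Set (EuclideanSpace ℝ (Fin d)))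
    (C : Set (EuclideanSpace ℝ (Fin d))) : Prop :=
  ∀ K : Set (EuclideanSpace ℝ (Fin d)), IsCompact K →
    Filter.Tendsto
      (fun i => ∫ y in K,
        |Set.indicator (A i) (fun _ => (1 : ℝ)) y - Set.indicator C (fun _ => (1 : ℝ)) y|)
      Filter.atTop (nhds 0)

/-- `C` is a cone with vertex `x`. -/
def IsConeWithVertex {d : ℕ} (C : Set (EuclideanSpace ℝ (Fin d)))
    (x : EuclideanSpace ℝ (Fin d)) : Prop :=
  ∀ y ∈ C, ∀ τ : ℝ, 0 < τ → x + τ • (y - x) ∈ C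

/-! ### Auxiliary lemmas -/

section Aux

open Pointwise

lemma aux_null {d : ℕ} {N S : Set (EuclideanSpace ℝ (Fin d))}
    (h : ∀ x ∈ S, ∃ ρ > (0:ℝ), volume (N ∩ ball x ρ) = 0) : volume (N ∩ S) = 0 := by
  classical
  by_cases hS : S = ∅
  · simp [hS]
  choose ρ hρ0 hρnull using fun x : S => h x x.2
  obtain ⟨T, hTc, hTeq⟩ := TopologicalSpace.isOpen_iUnion_countable
    (fun x : S => ball (x : EuclideanSpace ℝ (Fin d)) (ρ x)) (fun _ => isOpen_ball)
  have hcover : S ⊆ ⋃ x ∈ T, ball (x : EuclideanSpace ℝ (Fin d)) (ρ x) := by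
    intro y hy
    rw [hTeq]
    exact Set.mem_iUnion.2 ⟨⟨y, hy⟩, mem_ball_self (hρ0 ⟨y, hy⟩)⟩
  have hsub : N ∩ S ⊆ ⋃ x ∈ T, (N ∩ ball (x : EuclideanSpace ℝ (Fin d)) (ρ x)) := by
    intro y hy
    rcases Set.mem_iUnion₂.1 (hcover hy.2) with ⟨x, hxT, hxb⟩
    exact Set.mem_iUnion₂.2 ⟨x, hxT, hy.1, hxb⟩
  exact measure_mono_null hsub ((measure_biUnion_null_iff hTc).2 fun x _ => hρnull x)

lemma isOpen_mInterior {d : ℕ} (M : Set (EuclideanSpace ℝ (Fin d))) :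
    IsOpen (mInterior M) := by
  rw [Metric.isOpen_iff]
  rintro x ⟨ρ, hρ, hnull⟩
  refine ⟨ρ/2, by linarith, fun y hy => ⟨ρ/2, by linarith, ?_⟩⟩
  refine measure_mono_null (fun w hw => ?_) hnull
  rcases hw with ⟨hwb, hwM⟩
  refine ⟨?_, hwM⟩
  have h1 : dist w x ≤ dist w y + dist y x := dist_triangle _ _ _
  simp only [mem_ball] at *
  linarith

lemma isOpen_mExterior {d : ℕ} (M : Set (EuclideanSpace ℝ (Fin d))) :
    IsOpen (mExterior M) := by
  rw [Metric.isOpen_iff]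
  rintro x ⟨ρ, hρ, hnull⟩
  refine ⟨ρ/2, by linarith, fun y hy => ⟨ρ/2, by linarith, ?_⟩⟩
  refine measure_mono_null (fun w hw => ?_) hnull
  rcases hw with ⟨hwM, hwb⟩
  refine ⟨hwM, ?_⟩
  have h1 : dist w x ≤ dist w y + dist y x := dist_triangle _ _ _
  simp only [mem_ball] at *
  linarith

lemma volume_mInterior_diff {d : ℕ} (M : Set (EuclideanSpace ℝ (Fin d))) :
    volume (mInterior M \ M) = 0 := by
  have h : mInterior M \ M = Mᶜ ∩ mInterior M := by
    ext y; simp [Set.mem_diff, and_comm]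
  rw [h]
  refine aux_null fun x hx => ?_
  rcases hx with ⟨ρ, hρ, hnull⟩
  refine ⟨ρ, hρ, ?_⟩
  rw [show Mᶜ ∩ ball x ρ = ball x ρ \ M by ext y; simp [Set.mem_diff, and_comm]]
  exact hnull

lemma volume_inter_mExterior {d : ℕ} (M : Set (EuclideanSpace ℝ (Fin d))) :
    volume (M ∩ mExterior M) = 0 := by
  refine aux_null fun x hx => ?_
  rcases hx with ⟨ρ, hρ, hnull⟩
  exact ⟨ρ, hρ, hnull⟩

lemma measurableSet_E {n : ℕ} (u : Metric.sphere (0 : EuclideanSpace ℝ (Fin (n + 1))) 1 → ℝ)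
    (hu : Measurable u) :
    MeasurableSet {x : EuclideanSpace ℝ (Fin (n+1)) |
      ∃ ω : Metric.sphere (0 : EuclideanSpace ℝ (Fin (n + 1))) 1,
      ∃ s : ℝ, 0 < s ∧ s < u ω ∧ x = s • (ω : EuclideanSpace ℝ (Fin (n + 1)))} := by
  classical
  have hs : MeasurableSet ({0}ᶜ : Set (EuclideanSpace ℝ (Fin (n+1)))) :=
    (measurableSet_singleton 0).compl
  set r : ({0}ᶜ : Set (EuclideanSpace ℝ (Fin (n+1)))) →
      Metric.sphere (0 : EuclideanSpace ℝ (Fin (n+1))) 1 := fun x =>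
    ⟨‖(x : EuclideanSpace ℝ (Fin (n+1)))‖⁻¹ • (x : EuclideanSpace ℝ (Fin (n+1))), by
      have hx : (x : EuclideanSpace ℝ (Fin (n+1))) ≠ 0 := x.2
      simp [mem_sphere_iff_norm, norm_smul, abs_of_nonneg, inv_mul_cancel₀,
        norm_ne_zero_iff.2 hx]⟩ with hr
  have hrm : Measurable r := by
    apply Measurable.subtype_mk
    exact (measurable_norm.comp measurable_subtype_coe).inv.smul measurable_subtype_coe
  set T : Set ({0}ᶜ : Set (EuclideanSpace ℝ (Fin (n+1)))) :=
    {x | ‖(x : EuclideanSpace ℝ (Fin (n+1)))‖ < u (r x)} with hT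
  have hTm : MeasurableSet T :=
    measurableSet_lt (measurable_norm.comp measurable_subtype_coe) (hu.comp hrm)
  have himg : MeasurableSet (Subtype.val '' T) := MeasurableSet.subtype_image hs hTm
  convert himg using 1
  ext x
  constructor
  · rintro ⟨ω, s, hs0, hsu, rfl⟩
    have hω : ‖(ω : EuclideanSpace ℝ (Fin (n+1)))‖ = 1 := mem_sphere_zero_iff_norm.1 ω.2
    have hx0 : s • (ω : EuclideanSpace ℝ (Fin (n+1))) ≠ 0 := by
      intro h
      rcases smul_eq_zero.1 h with h1 | h1
      · exact absurd h1 (ne_of_gt hs0)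
      · simp [h1] at hω
    refine ⟨⟨s • (ω : EuclideanSpace ℝ (Fin (n+1))), hx0⟩, ?_, rfl⟩
    have hnorm : ‖s • (ω : EuclideanSpace ℝ (Fin (n+1)))‖ = s := by
      rw [norm_smul, hω, mul_one, Real.norm_eq_abs, abs_of_pos hs0]
    have hreq : r ⟨s • (ω : EuclideanSpace ℝ (Fin (n+1))), hx0⟩ = ω := by
      apply Subtype.ext
      simp only [hr, hnorm]
      rw [smul_smul, inv_mul_cancel₀ (ne_of_gt hs0), one_smul]
    simp only [hT, Set.mem_setOf_eq, hreq, hnorm]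
    exact hsu
  · rintro ⟨⟨y, hy0⟩, hyT, rfl⟩
    have hy0' : y ≠ 0 := hy0
    refine ⟨r ⟨y, hy0⟩, ‖y‖, norm_pos_iff.2 hy0', hyT, ?_⟩
    simp only [hr]
    rw [smul_smul, mul_inv_cancel₀ (norm_ne_zero_iff.2 hy0'), one_smul]

lemma E_scale {n : ℕ} (u : Metric.sphere (0 : EuclideanSpace ℝ (Fin (n + 1))) 1 → ℝ)
    {p : EuclideanSpace ℝ (Fin (n+1))}
    (hp : p ∈ {x : EuclideanSpace ℝ (Fin (n+1)) |
      ∃ ω : Metric.sphere (0 : EuclideanSpace ℝ (Fin (n + 1))) 1,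
      ∃ s : ℝ, 0 < s ∧ s < u ω ∧ x = s • (ω : EuclideanSpace ℝ (Fin (n + 1)))})
    {τ : ℝ} (h0 : 0 < τ) (h1 : τ ≤ 1) :
    τ • p ∈ {x : EuclideanSpace ℝ (Fin (n+1)) |
      ∃ ω : Metric.sphere (0 : EuclideanSpace ℝ (Fin (n + 1))) 1,
      ∃ s : ℝ, 0 < s ∧ s < u ω ∧ x = s • (ω : EuclideanSpace ℝ (Fin (n + 1)))} := by
  rcases hp with ⟨ω, s, hs0, hsu, rfl⟩
  refine ⟨ω, τ * s, by positivity, ?_, by rw [smul_smul]⟩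
  nlinarith

lemma integral_bound {d : ℕ} {A C K : Set (EuclideanSpace ℝ (Fin d))}
    (hA : MeasurableSet A) (hC : MeasurableSet C) (hK : MeasurableSet K)
    (hKfin : volume K ≠ ⊤) :
    volume (K ∩ (C \ A)) ≤ ENNReal.ofReal (∫ y in K,
      |Set.indicator A (fun _ => (1:ℝ)) y - Set.indicator C (fun _ => (1:ℝ)) y|) := by
  set f : EuclideanSpace ℝ (Fin d) → ℝ :=
    fun y => |Set.indicator A (fun _ => (1:ℝ)) y - Set.indicator C (fun _ => (1:ℝ)) y| with hf
  have hfm : Measurable f :=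
    ((measurable_const.indicator hA).sub (measurable_const.indicator hC)).abs
  have hconst : IntegrableOn (fun _ => (1:ℝ)) K volume :=
    integrableOn_const hKfin
  have hfi : IntegrableOn f K := by
    refine Integrable.mono' hconst hfm.aestronglyMeasurable ?_
    refine Filter.Eventually.of_forall fun y => ?_
    rw [Real.norm_eq_abs, abs_abs]
    have h1 : Set.indicator A (fun _ => (1:ℝ)) y ∈ Set.Icc (0:ℝ) 1 := by
      by_cases h : y ∈ A <;> simp [h]
    have h2 : Set.indicator C (fun _ => (1:ℝ)) y ∈ Set.Icc (0:ℝ) 1 := by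
      by_cases h : y ∈ C <;> simp [h]
    rw [abs_sub_le_iff]
    obtain ⟨a1,b1⟩ := h1; obtain ⟨a2,b2⟩ := h2
    constructor <;> linarith
  have hind : IntegrableOn (Set.indicator (C \ A) (fun _ => (1:ℝ))) K := by
    refine Integrable.mono' hconst
      (measurable_const.indicator (hC.diff hA)).aestronglyMeasurable ?_
    refine Filter.Eventually.of_forall fun y => ?_
    by_cases h : y ∈ C \ A <;> simp [h]
  have hle : ∀ y, Set.indicator (C \ A) (fun _ => (1:ℝ)) y ≤ f y := by
    intro y
    by_cases h : y ∈ C \ A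
    · simp only [Set.indicator_of_mem h, hf]
      rw [Set.indicator_of_notMem h.2, Set.indicator_of_mem h.1]
      norm_num
    · rw [Set.indicator_of_notMem h]
      positivity
  have h1 : ∫ y in K, Set.indicator (C \ A) (fun _ => (1:ℝ)) y ≤ ∫ y in K, f y :=
    setIntegral_mono_on hind hfi hK fun y _ => hle y
  have h2 : ∫ y in K, Set.indicator (C \ A) (fun _ => (1:ℝ)) y
      = (volume (K ∩ (C \ A))).toReal := by
    rw [setIntegral_indicator (hC.diff hA), setIntegral_const]
    simp [measureReal_def]
  rw [← ENNReal.ofReal_toReal (a := volume (K ∩ (C \ A)))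
    (ne_top_of_le_ne_top hKfin (measure_mono Set.inter_subset_left))]
  exact ENNReal.ofReal_le_ofReal (by rw [← h2]; exact h1)

lemma image_affine_measure {d : ℕ} (τ : ℝ) (w : EuclideanSpace ℝ (Fin d))
    (S : Set (EuclideanSpace ℝ (Fin d))) :
    volume ((fun y => w + τ • y) '' S) = ENNReal.ofReal (|τ| ^ d) * volume S := by
  have h1 : (fun y : EuclideanSpace ℝ (Fin d) => w + τ • y) '' S = w +ᵥ (τ • S) := by
    ext y
    simp only [Set.mem_image, Set.mem_vadd_set, Set.mem_smul_set, vadd_eq_add]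
    constructor
    · rintro ⟨x, hx, rfl⟩; exact ⟨τ • x, ⟨x, hx, rfl⟩, rfl⟩
    · rintro ⟨_, ⟨x, hx, rfl⟩, rfl⟩; exact ⟨x, hx, rfl⟩
  rw [h1, measure_vadd, Measure.addHaar_smul, finrank_euclideanSpace_fin, abs_pow]

noncomputable def phiEquiv (n : ℕ) : EuclideanSpace ℝ (Fin (n+1)) ≃ᵐ ℝ × (Fin n → ℝ) :=
  (MeasurableEquiv.toLp 2 (Fin (n+1) → ℝ)).symm.trans
    (MeasurableEquiv.piFinSuccAbove (fun _ => ℝ) (Fin.last n))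

lemma phiEquiv_mp (n : ℕ) : MeasurePreserving (phiEquiv n) volume volume := by
  have h1 := EuclideanSpace.volume_preserving_symm_measurableEquiv_toLp (Fin (n+1))
  have h2 := measurePreserving_piFinSuccAbove (fun _ : Fin (n+1) => (volume : Measure ℝ)) (Fin.last n)
  have h3 : (volume : Measure (Fin (n+1) → ℝ)) = Measure.pi fun _ => volume := volume_pi
  have h4 : (volume : Measure (ℝ × (Fin n → ℝ))) =
      (volume : Measure ℝ).prod (Measure.pi fun _ : Fin n => volume) := by
    rw [Measure.volume_eq_prod, volume_pi]
  rw [← h3, ← h4] at h2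
  exact h2.comp h1

lemma phiEquiv_apply_snoc (n : ℕ) (x : Fin n → ℝ) (a : ℝ) :
    phiEquiv n (WithLp.toLp 2 (Fin.snoc x a : Fin (n+1) → ℝ)) = (a, x) := by
  show (MeasurableEquiv.piFinSuccAbove (fun _ => ℝ) (Fin.last n))
    ((MeasurableEquiv.toLp 2 (Fin (n+1) → ℝ)).symm (WithLp.toLp 2 (Fin.snoc x a : Fin (n+1) → ℝ))) = (a, x)
  have h : (MeasurableEquiv.toLp 2 (Fin (n+1) → ℝ)).symm (WithLp.toLp 2 (Fin.snoc x a : Fin (n+1) → ℝ))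
      = (Fin.snoc x a : Fin (n+1) → ℝ) := rfl
  rw [h]
  ext i
  · simp [MeasurableEquiv.piFinSuccAbove]
  · simp [MeasurableEquiv.piFinSuccAbove, Fin.succAbove_last]

lemma phiEquiv_symm_apply (n : ℕ) (x : Fin n → ℝ) (a : ℝ) :
    (phiEquiv n).symm (a, x) = WithLp.toLp 2 (Fin.snoc x a : Fin (n+1) → ℝ) := by
  rw [← phiEquiv_apply_snoc n x a, MeasurableEquiv.symm_apply_apply]

lemma continuous_snoc {n : ℕ} (a : ℝ) :
    Continuous fun x : EuclideanSpace ℝ (Fin n) =>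
      (WithLp.toLp 2 (Fin.snoc x.ofLp a : Fin (n+1) → ℝ) : EuclideanSpace ℝ (Fin (n+1))) := by
  have h : Continuous fun x : EuclideanSpace ℝ (Fin n) => (Fin.snoc x.ofLp a : Fin (n+1) → ℝ) := by
    apply continuous_pi
    intro i
    induction i using Fin.lastCases with
    | last => simpa [Fin.snoc_last] using continuous_const
    | cast j => simp only [Fin.snoc_castSucc]; exact (continuous_apply (A := fun _ : Fin n => ℝ) j).comp (PiLp.continuous_ofLp 2 fun _ : Fin n => ℝ)
  exact (PiLp.continuous_toLp 2 fun _ : Fin (n+1) => ℝ).comp h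

end Aux

section Main

open Pointwise

set_option maxHeartbeats 2000000 in
lemma stepA {n : ℕ}
    (u : Metric.sphere (0 : EuclideanSpace ℝ (Fin (n + 1))) 1 → ℝ)
    (E : Set (EuclideanSpace ℝ (Fin (n + 1))))
    (hEmeas : MeasurableSet E)
    (hEscale : ∀ p ∈ E, ∀ τ : ℝ, 0 < τ → τ ≤ 1 → τ • p ∈ E)
    (z : ℝ) (hz : 0 < z)
    (t : ℕ → ℝ) (ht : ∀ i, 0 < t i)
    (htlim : Filter.Tendsto t Filter.atTop (nhds 0))
    (C : Set (EuclideanSpace ℝ (Fin (n + 1)))) (hCmeas : MeasurableSet C)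
    (hconv : L1locConvergesTo
      (fun i => {y | z • EuclideanSpace.single (Fin.last n) (1 : ℝ) +
        t i • (y - z • EuclideanSpace.single (Fin.last n) (1 : ℝ)) ∈ E}) C) :
    ∀ x ∈ mInterior C, ∀ s : ℝ, 0 < s →
      x - s • EuclideanSpace.single (Fin.last n) (1:ℝ) ∉ mExterior C := by
  classical
  set e₀ : EuclideanSpace ℝ (Fin (n+1)) := EuclideanSpace.single (Fin.last n) (1:ℝ) with he₀
  set U : Set (EuclideanSpace ℝ (Fin (n+1))) := mInterior C with hUdef
  set V : Set (EuclideanSpace ℝ (Fin (n+1))) := mExterior C with hVdef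
  set A : ℕ → Set (EuclideanSpace ℝ (Fin (n+1))) :=
    fun i => {y | z • e₀ + t i • (y - z • e₀) ∈ E} with hA
  have hAmeas : ∀ i, MeasurableSet (A i) := by
    intro i
    exact hEmeas.preimage
      ((continuous_const.add ((continuous_id.sub continuous_const).const_smul (t i))).measurable)
  rintro x hxU s hs ⟨ρ₂, hρ₂, hρ₂null⟩
  obtain ⟨ρ₁, hρ₁, hρ₁null⟩ := hxU
  set ρ := min ρ₁ ρ₂ with hρdef
  have hρ : 0 < ρ := lt_min hρ₁ hρ₂
  have hUnull : volume (ball x ρ \ C) = 0 :=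
    measure_mono_null (Set.diff_subset_diff_left (ball_subset_ball (min_le_left _ _))) hρ₁null
  have hVnull : volume (C ∩ ball (x - s • e₀) ρ) = 0 :=
    measure_mono_null
      (Set.inter_subset_inter_right _ (ball_subset_ball (min_le_right _ _))) hρ₂null
  set B' := ball x (ρ/2) with hB'
  set m := volume B' with hm
  have hm0 : m ≠ 0 := (measure_ball_pos _ _ (by linarith)).ne'
  have hmtop : m ≠ ⊤ := measure_ball_lt_top.ne
  have hm2top : m/2 ≠ ⊤ := ne_top_of_le_ne_top hmtop ENNReal.half_le_self
  have hm20 : m/2 ≠ 0 := by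
    simp [ENNReal.div_eq_zero_iff, hm0]
  set κ : ENNReal := ENNReal.ofReal ((1/2:ℝ)^(n+1)) * (m/2) with hκ
  have hκ0 : κ ≠ 0 := by
    apply mul_ne_zero _ hm20
    simp only [ne_eq, ENNReal.ofReal_eq_zero, not_le]
    positivity
  have hκtop : κ ≠ ⊤ := ENNReal.mul_ne_top ENNReal.ofReal_ne_top hm2top
  -- eventual facts
  set g : ℕ → ℝ := fun i => s * t i / (z * (1 - t i)) with hg
  have hgl : Filter.Tendsto g Filter.atTop (nhds 0) := by
    have h1 : Filter.Tendsto (fun i => s * t i) Filter.atTop (nhds (s * 0)) :=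
      htlim.const_mul s
    have h2 : Filter.Tendsto (fun i => z * (1 - t i)) Filter.atTop (nhds (z * (1 - 0))) :=
      (tendsto_const_nhds.sub htlim).const_mul z
    have h3 := h1.div h2 (by simp [ne_of_gt hz])
    rw [mul_zero, zero_div] at h3
    exact h3
  have ev1 : ∀ᶠ i in Filter.atTop, t i < 1/2 :=
    htlim.eventually_lt_const (by norm_num)
  have ev2 : ∀ᶠ i in Filter.atTop, g i < 1/2 :=
    hgl.eventually_lt_const (by norm_num)
  have ev3 : ∀ᶠ i in Filter.atTop, g i * ‖x‖ < ρ/4 := by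
    have h1 : Filter.Tendsto (fun i => g i * ‖x‖) Filter.atTop (nhds (0 * ‖x‖)) :=
      hgl.mul_const ‖x‖
    rw [zero_mul] at h1
    exact h1.eventually_lt_const (by positivity)
  have hIm2 : (0:ℝ) < (m/2).toReal := ENNReal.toReal_pos hm20 hm2top
  have hIκ : (0:ℝ) < κ.toReal := ENNReal.toReal_pos hκ0 hκtop
  have ev4 : ∀ᶠ i in Filter.atTop, (∫ y in closedBall x ρ,
      |Set.indicator (A i) (fun _ => (1:ℝ)) y - Set.indicator C (fun _ => (1:ℝ)) y|)
      < (m/2).toReal :=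
    (hconv (closedBall x ρ) (isCompact_closedBall x ρ)).eventually_lt_const hIm2
  have ev5 : ∀ᶠ i in Filter.atTop, (∫ y in closedBall (x - s • e₀) ρ,
      |Set.indicator (A i) (fun _ => (1:ℝ)) y - Set.indicator C (fun _ => (1:ℝ)) y|)
      < κ.toReal :=
    (hconv (closedBall (x - s • e₀) ρ) (isCompact_closedBall _ ρ)).eventually_lt_const hIκ
  obtain ⟨i, hi1, hi2, hi3, hi4, hi5⟩ :=
    (ev1.and (ev2.and (ev3.and (ev4.and ev5)))).exists
  -- set up the contraction map
  have hti0 : 0 < t i := ht i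
  have hti1 : t i < 1 := by linarith
  have hgpos : 0 < g i := by
    rw [hg]
    have : (0:ℝ) < 1 - t i := by linarith
    positivity
  set τ : ℝ := 1 - g i with hτ
  have hτhalf : (1/2:ℝ) ≤ τ := by rw [hτ]; linarith
  have hτpos : 0 < τ := by linarith
  have hτle : τ ≤ 1 := by rw [hτ]; linarith
  -- closure of A i under F
  have hclosed : ∀ y ∈ A i, (-(s • e₀) + τ • y) ∈ A i := by
    intro y hy
    have hid : z • e₀ + t i • ((-(s • e₀) + τ • y) - z • e₀)
        = τ • (z • e₀ + t i • (y - z • e₀)) := by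
      have hd1 : t i ≠ 0 := ne_of_gt hti0
      have hd2 : (1:ℝ) - t i ≠ 0 := by linarith
      have hd3 : z ≠ 0 := ne_of_gt hz
      rw [hτ, hg]
      match_scalars
      · field_simp
        ring
      · ring
    show z • e₀ + t i • ((-(s • e₀) + τ • y) - z • e₀) ∈ E
    rw [hid]
    exact hEscale _ hy τ hτpos hτle
  -- geometric containment
  have hgeo : ∀ y ∈ B', (-(s • e₀) + τ • y) ∈ ball (x - s • e₀) ρ := by
    intro y hy
    rw [mem_ball, dist_eq_norm]
    have hid2 : (-(s • e₀) + τ • y) - (x - s • e₀) = τ • (y - x) + (τ - 1) • x := by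
      match_scalars <;> ring
    rw [hid2]
    have hb1 : ‖τ • (y - x)‖ ≤ τ * (ρ/2) := by
      rw [norm_smul, Real.norm_eq_abs, abs_of_pos hτpos]
      have : ‖y - x‖ < ρ/2 := by
        rw [← dist_eq_norm]
        exact mem_ball.1 hy
      nlinarith
    have hb2 : ‖(τ - 1) • x‖ < ρ/4 := by
      rw [norm_smul, Real.norm_eq_abs]
      have habs : |τ - 1| = g i := by
        rw [hτ]
        rw [abs_of_nonpos (by linarith)]
        ring
      rw [habs]
      exact hi3
    calc ‖τ • (y - x) + (τ - 1) • x‖ ≤ ‖τ • (y - x)‖ + ‖(τ - 1) • x‖ := norm_add_le _ _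
      _ < τ * (ρ/2) + ρ/4 := by linarith
      _ ≤ ρ := by nlinarith
  -- measure bounds
  have hdiff_bound : volume (B' \ A i) ≤ m/2 := by
    have hsub : B' \ A i ⊆ (closedBall x ρ ∩ (C \ A i)) ∪ (ball x ρ \ C) := by
      intro y hy
      by_cases hyC : y ∈ C
      · exact Or.inl ⟨(ball_subset_closedBall (ball_subset_ball (by linarith) hy.1)), hyC, hy.2⟩
      · exact Or.inr ⟨ball_subset_ball (by linarith) hy.1, hyC⟩
    refine le_trans (measure_mono hsub) (le_trans (measure_union_le _ _) ?_)
    have hb := integral_bound (hAmeas i) hCmeas (measurableSet_closedBall)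
      (measure_closedBall_lt_top).ne (A := A i) (C := C) (K := closedBall x ρ)
    have h2' : ENNReal.ofReal (∫ y in closedBall x ρ,
        |Set.indicator (A i) (fun _ => (1:ℝ)) y - Set.indicator C (fun _ => (1:ℝ)) y|)
        ≤ m/2 := by
      refine le_of_lt ?_
      rw [← ENNReal.ofReal_toReal hm2top]
      exact (ENNReal.ofReal_lt_ofReal_iff hIm2).2 hi4
    rw [hUnull, add_zero]
    exact le_trans hb h2'
  have hinter_lb : m/2 ≤ volume (B' ∩ A i) := by
    have heq : volume (B' ∩ A i) + volume (B' \ A i) = m :=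
      measure_inter_add_diff B' (hAmeas i)
    have h2' : m/2 + m/2 ≤ volume (B' ∩ A i) + m/2 := by
      rw [ENNReal.add_halves]
      calc m = volume (B' ∩ A i) + volume (B' \ A i) := heq.symm
        _ ≤ volume (B' ∩ A i) + m/2 := add_le_add le_rfl hdiff_bound
    exact (ENNReal.add_le_add_iff_right hm2top).1 h2'
  -- upper bound for A i in the lower ball
  have hupper : volume (A i ∩ ball (x - s • e₀) ρ) < κ := by
    have hsub : A i ∩ ball (x - s • e₀) ρ ⊆
        (closedBall (x - s • e₀) ρ ∩ (A i \ C)) ∪ (C ∩ ball (x - s • e₀) ρ) := by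
      intro y hy
      by_cases hyC : y ∈ C
      · exact Or.inr ⟨hyC, hy.2⟩
      · exact Or.inl ⟨ball_subset_closedBall hy.2, hy.1, hyC⟩
    refine lt_of_le_of_lt (measure_mono hsub) (lt_of_le_of_lt (measure_union_le _ _) ?_)
    have hb := integral_bound hCmeas (hAmeas i) (measurableSet_closedBall)
      (measure_closedBall_lt_top).ne (A := C) (C := A i) (K := closedBall (x - s • e₀) ρ)
    have hswap : (∫ y in closedBall (x - s • e₀) ρ,
        |Set.indicator C (fun _ => (1:ℝ)) y - Set.indicator (A i) (fun _ => (1:ℝ)) y|)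
        = (∫ y in closedBall (x - s • e₀) ρ,
        |Set.indicator (A i) (fun _ => (1:ℝ)) y - Set.indicator C (fun _ => (1:ℝ)) y|) := by
      congr 1
      funext y
      rw [abs_sub_comm]
    rw [hswap] at hb
    rw [hVnull, add_zero]
    refine lt_of_le_of_lt hb ?_
    rw [← ENNReal.ofReal_toReal hκtop]
    exact (ENNReal.ofReal_lt_ofReal_iff hIκ).2 hi5
  -- the contradiction
  have hchain : κ ≤ volume (A i ∩ ball (x - s • e₀) ρ) := by
    have c1 : κ ≤ ENNReal.ofReal (|τ| ^ (n+1)) * (m/2) := by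
      rw [hκ]
      refine mul_le_mul_left (ENNReal.ofReal_le_ofReal ?_) _
      rw [abs_of_pos hτpos]
      exact pow_le_pow_left₀ (by norm_num) hτhalf _
    have c2 : ENNReal.ofReal (|τ| ^ (n+1)) * (m/2)
        ≤ ENNReal.ofReal (|τ| ^ (n+1)) * volume (B' ∩ A i) :=
      mul_le_mul_right hinter_lb _
    have c3 : ENNReal.ofReal (|τ| ^ (n+1)) * volume (B' ∩ A i)
        = volume ((fun y => -(s • e₀) + τ • y) '' (B' ∩ A i)) :=
      (image_affine_measure τ (-(s • e₀)) (B' ∩ A i)).symm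
    have c4 : volume ((fun y => -(s • e₀) + τ • y) '' (B' ∩ A i))
        ≤ volume (A i ∩ ball (x - s • e₀) ρ) := by
      refine measure_mono ?_
      rintro _ ⟨y, ⟨hyB, hyA⟩, rfl⟩
      exact ⟨hclosed y hyA, hgeo y hyB⟩
    exact le_trans c1 (le_trans c2 (le_trans (le_of_eq c3) c4))
  exact absurd hupper (not_lt.2 hchain)

end Main

lemma snoc_sub_single {n : ℕ} (xh : Fin n → ℝ) (a b : ℝ) :
    (WithLp.toLp 2 (Fin.snoc xh a : Fin (n+1) → ℝ) : EuclideanSpace ℝ (Fin (n+1))) -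
      (a - b) • EuclideanSpace.single (Fin.last n) (1:ℝ)
      = (WithLp.toLp 2 (Fin.snoc xh b : Fin (n+1) → ℝ) : EuclideanSpace ℝ (Fin (n+1))) := by
  ext i
  rw [PiLp.sub_apply, PiLp.smul_apply, EuclideanSpace.single_apply]
  induction i using Fin.lastCases with
  | last => simp [Fin.snoc_last]
  | cast j =>
      have hne : (Fin.castSucc j : Fin (n+1)) ≠ Fin.last n := (Fin.castSucc_lt_last j).ne
      simp [Fin.snoc_castSucc, hne]

section Final

lemma finalPart {n : ℕ}
    (C : Set (EuclideanSpace ℝ (Fin (n + 1)))) (hCmeas : MeasurableSet C)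
    (key : ∀ x ∈ mInterior C, ∀ s : ℝ, 0 < s →
      x - s • EuclideanSpace.single (Fin.last n) (1:ℝ) ∉ mExterior C)
    (hbdry : volume (mBoundary C) = 0) :
    ∃ v : EuclideanSpace ℝ (Fin n) → EReal,
      Measurable v ∧ volume (symmDiff C (subgraph v)) = 0 := by
  classical
  set U : Set (EuclideanSpace ℝ (Fin (n+1))) := mInterior C with hUdef
  set V : Set (EuclideanSpace ℝ (Fin (n+1))) := mExterior C with hVdef
  have hUopen : IsOpen U := isOpen_mInterior C
  have hVopen : IsOpen V := isOpen_mExterior C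
  have hbd : volume ((U ∪ V)ᶜ) = 0 := hbdry
  -- the candidate function
  set v : EuclideanSpace ℝ (Fin n) → EReal := fun xh =>
    sSup ((fun a : ℝ => (a : EReal)) ''
      {a : ℝ | (WithLp.toLp 2 (Fin.snoc xh.ofLp a : Fin (n+1) → ℝ) : EuclideanSpace ℝ (Fin (n+1))) ∈ U}) with hv
  have hvmeas : Measurable v := by
    apply LowerSemicontinuous.measurable
    intro xh y hy
    rw [hv] at hy
    obtain ⟨_, ⟨a, ha, rfl⟩, hlt⟩ := lt_sSup_iff.1 hy
    have hopen : IsOpen {w : EuclideanSpace ℝ (Fin n) |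
        (WithLp.toLp 2 (Fin.snoc w.ofLp a : Fin (n+1) → ℝ) : EuclideanSpace ℝ (Fin (n+1))) ∈ U} :=
      hUopen.preimage (continuous_snoc a)
    filter_upwards [hopen.mem_nhds ha] with w hw
    exact lt_of_lt_of_le hlt (le_sSup ⟨a, hw, rfl⟩)
  have hsubmeas : MeasurableSet (subgraph v) := by
    have hf : Measurable fun x : EuclideanSpace ℝ (Fin (n+1)) =>
        ((x (Fin.last n) : ℝ) : EReal) := by
      refine measurable_coe_real_ereal.comp ?_
      exact ((continuous_apply (Fin.last n)).comp
        (PiLp.continuous_ofLp 2 fun _ : Fin (n+1) => ℝ)).measurable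
    have hproj : Continuous fun x : EuclideanSpace ℝ (Fin (n+1)) =>
        (WithLp.toLp 2 (fun i : Fin n => x i.castSucc) : EuclideanSpace ℝ (Fin n)) := by
      refine (PiLp.continuous_toLp 2 fun _ : Fin n => ℝ).comp ?_
      exact continuous_pi fun i => (continuous_apply (Fin.castSucc i)).comp
        (PiLp.continuous_ofLp 2 fun _ : Fin (n+1) => ℝ)
    have hg : Measurable fun x : EuclideanSpace ℝ (Fin (n+1)) =>
        v (WithLp.toLp 2 fun i : Fin n => x i.castSucc) := hvmeas.comp hproj.measurable
    exact measurableSet_lt hf hg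
  -- C agrees a.e. with U
  have hCU : volume (symmDiff C U) = 0 := by
    rw [Set.symmDiff_def]
    refine measure_union_null ?_ ?_
    · refine measure_mono_null (fun y hy => ?_)
        (measure_union_null (volume_inter_mExterior C) hbd)
      by_cases hyV : y ∈ V
      · exact Or.inl ⟨hy.1, hyV⟩
      · exact Or.inr fun hm => (by
          rcases hm with hmU | hmV
          · exact hy.2 hmU
          · exact hyV hmV)
    · exact volume_mInterior_diff C
  -- U agrees a.e. with the subgraph of v, via Fubini
  set W : Set (EuclideanSpace ℝ (Fin (n+1))) := symmDiff U (subgraph v) with hW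
  have hWmeas : MeasurableSet W := by
    rw [hW, Set.symmDiff_def]
    exact (hUopen.measurableSet.diff hsubmeas).union (hsubmeas.diff hUopen.measurableSet)
  have hbdmeas : MeasurableSet ((U ∪ V)ᶜ : Set (EuclideanSpace ℝ (Fin (n+1)))) :=
    (hUopen.measurableSet.union hVopen.measurableSet).compl
  set B : Set (ℝ × (Fin n → ℝ)) := (phiEquiv n).symm ⁻¹' W with hB
  set Bb : Set (ℝ × (Fin n → ℝ)) := (phiEquiv n).symm ⁻¹' ((U ∪ V)ᶜ) with hBb
  have hBmeas : MeasurableSet B := (phiEquiv n).symm.measurable hWmeas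
  have hBbmeas : MeasurableSet Bb := (phiEquiv n).symm.measurable hbdmeas
  have hmp : MeasurePreserving (phiEquiv n).symm volume volume :=
    (phiEquiv_mp n).symm (phiEquiv n)
  have hvolB : volume B = volume W := hmp.measure_preimage hWmeas.nullMeasurableSet
  have hvolBb : volume Bb = 0 := by
    rw [hmp.measure_preimage hbdmeas.nullMeasurableSet]
    exact hbd
  have hfubB : volume B = ∫⁻ xh, volume ((fun a => (a, xh)) ⁻¹' B) ∂volume := by
    have h := Measure.prod_apply_symm (μ := (volume : Measure ℝ))
      (ν := (volume : Measure (Fin n → ℝ))) hBmeas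
    rwa [← Measure.volume_eq_prod] at h
  have hfubBb : (∫⁻ xh, volume ((fun a => (a, xh)) ⁻¹' Bb) ∂volume) = 0 := by
    have h := Measure.prod_apply_symm (μ := (volume : Measure ℝ))
      (ν := (volume : Measure (Fin n → ℝ))) hBbmeas
    rw [← Measure.volume_eq_prod] at h
    rw [← h]
    exact hvolBb
  have hae : ∀ᵐ xh ∂(volume : Measure (Fin n → ℝ)),
      volume ((fun a => (a, xh)) ⁻¹' Bb) = 0 :=
    (lintegral_eq_zero_iff (measurable_measure_prodMk_right hBbmeas)).1 hfubBb
  -- slice analysis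
  have hslice : ∀ᵐ xh ∂(volume : Measure (Fin n → ℝ)),
      volume ((fun a => (a, xh)) ⁻¹' B) = 0 := by
    filter_upwards [hae] with xh hxh
    set SU : Set ℝ := {a : ℝ | (WithLp.toLp 2 (Fin.snoc xh a : Fin (n+1) → ℝ) : EuclideanSpace ℝ (Fin (n+1))) ∈ U} with hSU
    have hmemB : ∀ a : ℝ, (a, xh) ∈ B ↔ (WithLp.toLp 2 (Fin.snoc xh a : Fin (n+1) → ℝ) : EuclideanSpace ℝ (Fin (n+1))) ∈ W := by
      intro a
      rw [hB, Set.mem_preimage, phiEquiv_symm_apply]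
    have hmemBb : ∀ a : ℝ, (a, xh) ∈ Bb ↔
        (WithLp.toLp 2 (Fin.snoc xh a : Fin (n+1) → ℝ) : EuclideanSpace ℝ (Fin (n+1))) ∈ (U ∪ V)ᶜ := by
      intro a
      rw [hBb, Set.mem_preimage, phiEquiv_symm_apply]
    have hvxh : v (WithLp.toLp 2 xh) = sSup ((fun a : ℝ => (a : EReal)) '' SU) := by rw [hv]
    have hsnocsub : ∀ a : ℝ, ((WithLp.toLp 2 (Fin.snoc xh a : Fin (n+1) → ℝ) : EuclideanSpace ℝ (Fin (n+1))) ∈ subgraph v)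
        ↔ (a : EReal) < v (WithLp.toLp 2 xh) := by
      intro a
      show ((WithLp.toLp 2 (Fin.snoc xh a : Fin (n+1) → ℝ) : EuclideanSpace ℝ (Fin (n+1))) (Fin.last n) : EReal)
        < v (WithLp.toLp 2 fun i : Fin n => (WithLp.toLp 2 (Fin.snoc xh a : Fin (n+1) → ℝ) : EuclideanSpace ℝ (Fin (n+1))) i.castSucc)
        ↔ (a : EReal) < v (WithLp.toLp 2 xh)
      have h1 : (WithLp.toLp 2 (Fin.snoc xh a : Fin (n+1) → ℝ) : EuclideanSpace ℝ (Fin (n+1))) (Fin.last n) = a :=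
        by simp
      have h2 : (fun i : Fin n => (WithLp.toLp 2 (Fin.snoc xh a : Fin (n+1) → ℝ) : EuclideanSpace ℝ (Fin (n+1))) i.castSucc)
          = xh := by
        funext i
        simp
      rw [h1, h2]
    have hdecomp : (fun a => (a, xh)) ⁻¹' B = symmDiff SU {a : ℝ | (a : EReal) < v (WithLp.toLp 2 xh)} := by
      ext a
      rw [Set.mem_preimage, hmemB a, hW, Set.mem_symmDiff, Set.mem_symmDiff]
      constructor
      · rintro (⟨h1, h2⟩ | ⟨h1, h2⟩)
        · exact Or.inl ⟨h1, fun hc => h2 ((hsnocsub a).2 hc)⟩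
        · exact Or.inr ⟨(hsnocsub a).1 h1, h2⟩
      · rintro (⟨h1, h2⟩ | ⟨h1, h2⟩)
        · exact Or.inl ⟨h1, fun hc => h2 ((hsnocsub a).1 hc)⟩
        · exact Or.inr ⟨(hsnocsub a).2 h1, h2⟩
    rw [hdecomp, Set.symmDiff_def]
    refine measure_union_null ?_ ?_
    · -- SU minus the interval: contained in a subsingleton
      refine measure_mono_null
        (?_ : SU \ {a : ℝ | (a : EReal) < v (WithLp.toLp 2 xh)} ⊆ {a : ℝ | (a : EReal) = v (WithLp.toLp 2 xh)})
        (Set.Subsingleton.measure_zero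
          (fun a ha b hb => EReal.coe_eq_coe_iff.1 (ha.trans hb.symm)) volume)
      intro a ha
      have hle : (a : EReal) ≤ v (WithLp.toLp 2 xh) := by
        rw [hvxh]
        exact le_sSup ⟨a, ha.1, rfl⟩
      exact le_antisymm hle (not_lt.1 ha.2)
    · -- interval minus SU: inside the null boundary slice
      refine measure_mono_null (fun b hb => ?_) hxh
      obtain ⟨hblt, hbU⟩ := hb
      rw [hvxh] at hblt
      have hblt2 : (b : EReal) < sSup ((fun a : ℝ => (a : EReal)) '' SU) := hblt
      obtain ⟨_, ⟨a, haU, rfl⟩, hba⟩ := lt_sSup_iff.1 hblt2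
      have hba' : (b : ℝ) < a := EReal.coe_lt_coe_iff.1 hba
      have hkey := key _ haU (a - b) (by linarith)
      rw [snoc_sub_single] at hkey
      rw [Set.mem_preimage, hmemBb b]
      intro hmem
      rcases hmem with hmU | hmV
      · exact hbU hmU
      · exact hkey hmV
  have hUsub : volume W = 0 := by
    rw [← hvolB, hfubB]
    rw [lintegral_congr_ae (hslice.mono fun xh h => h)]
    exact lintegral_zero
  refine ⟨v, hvmeas, ?_⟩
  refine measure_mono_null ?_ (measure_union_null hCU hUsub)
  exact symmDiff_triangle C U (subgraph v)

end Final

theorem blowup_of_polar_subgraph_is_subgraph {n : ℕ}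
    (c : ℝ) (hc : 0 < c)
    (u : Metric.sphere (0 : EuclideanSpace ℝ (Fin (n + 1))) 1 → ℝ)
    (hu : Measurable u) (huc : ∀ ω, c ≤ u ω)
    (E : Set (EuclideanSpace ℝ (Fin (n + 1))))
    (hE : E = {x | ∃ ω : Metric.sphere (0 : EuclideanSpace ℝ (Fin (n + 1))) 1,
      ∃ s : ℝ, 0 < s ∧ s < u ω ∧ x = s • (ω : EuclideanSpace ℝ (Fin (n + 1)))})
    (z : ℝ) (hz : 0 < z)
    (t : ℕ → ℝ) (ht : ∀ i, 0 < t i)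
    (htlim : Filter.Tendsto t Filter.atTop (nhds 0))
    (C : Set (EuclideanSpace ℝ (Fin (n + 1)))) (hCmeas : MeasurableSet C)
    (hconv : L1locConvergesTo
      (fun i => {y | z • EuclideanSpace.single (Fin.last n) (1 : ℝ) +
        t i • (y - z • EuclideanSpace.single (Fin.last n) (1 : ℝ)) ∈ E}) C)
    (hcone : IsConeWithVertex C 0)
    (hbdry : volume (mBoundary C) = 0) :
    ∃ v : EuclideanSpace ℝ (Fin n) → EReal,
      Measurable v ∧ volume (symmDiff C (subgraph v)) = 0 := by
  classical
  have hEmeas : MeasurableSet E := hE ▸ measurableSet_E u hu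
  have hEscale : ∀ p ∈ E, ∀ τ : ℝ, 0 < τ → τ ≤ 1 → τ • p ∈ E := by
    intro p hp τ h0 h1
    rw [hE] at hp ⊢
    exact E_scale u hp h0 h1
  have key := stepA u E hEmeas hEscale z hz t ht htlim C hCmeas hconv
  exact finalPart C hCmeas key hbdry
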